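/- Let p and q be positive real numbers and let (u_n)_{n≥0} be defined by u_0 = 0, u_1 = 1, u_{n+2} = p·u_{n+1} + q·u_n. Let h_0 be a real number such that h_0 ≠ -(p + √(p² + 4q))/2 and h_0 ≠ -u_{m+1}/u_m for every integer m ≥ 1, and let (h_n)_{n≥0} satisfy h_{n+1} = q/(p + h_n) for all n ≥ 0. Then the sequence (h_n) converges to (-p + √(p² + 4q))/2 = q/Φ₊, where Φ₊ = (p + √(p² + 4q))/2. -/

import Mathlib

open Filter Real

theorem stmt_15 (p q : ℝ) (hp : 0 < p) (hq : 0 < q) (u : ℕ → ℝ)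
    (hu0 : u 0 = 0) (hu1 : u 1 = 1)
    (hurec : ∀ n : ℕ, u (n + 2) = p * u (n + 1) + q * u n)
    (h : ℕ → ℝ)
    (h0 : h 0 ≠ -((p + Real.sqrt (p ^ 2 + 4 * q)) / 2))
    (h0' : ∀ m : ℕ, 1 ≤ m → h 0 ≠ -(u (m + 1) / u m))
    (hrec : ∀ n : ℕ, h (n + 1) = q / (p + h n)) :
    Filter.Tendsto h Filter.atTop (nhds ((-p + Real.sqrt (p ^ 2 + 4 * q)) / 2)) ∧
      (-p + Real.sqrt (p ^ 2 + 4 * q)) / 2 = q / ((p + Real.sqrt (p ^ 2 + 4 * q)) / 2) := by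
  set s : ℝ := Real.sqrt (p ^ 2 + 4 * q) with hs_def
  have hD : (0:ℝ) ≤ p ^ 2 + 4 * q := by positivity
  have hs2 : s ^ 2 = p ^ 2 + 4 * q := Real.sq_sqrt hD
  have hps : p < s := by
    nlinarith [hs2, Real.sqrt_nonneg (p ^ 2 + 4 * q)]
  have hs_pos : 0 < s := lt_trans hp hps
  set α : ℝ := (p + s) / 2 with hα_def
  set β : ℝ := (p - s) / 2 with hβ_def
  have hα_pos : 0 < α := by rw [hα_def]; positivity
  have hα_ne : α ≠ 0 := ne_of_gt hα_pos
  have hβ_neg : β < 0 := by rw [hβ_def]; linarith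
  have hαβ : α - β = s := by rw [hα_def, hβ_def]; ring
  have hα2 : α ^ 2 = p * α + q := by rw [hα_def]; nlinarith [hs2]
  have hβ2 : β ^ 2 = p * β + q := by rw [hβ_def]; nlinarith [hs2]
  -- positivity of u
  have hupos : ∀ n : ℕ, 0 ≤ u n ∧ 0 < u (n + 1) := by
    intro n
    induction n with
    | zero => exact ⟨le_of_eq hu0.symm, by rw [hu1]; norm_num⟩
    | succ k ih =>
      refine ⟨ih.2.le, ?_⟩
      rw [hurec k]
      have := ih.1; have := ih.2
      nlinarith
  -- Binet
  have hbin : ∀ n : ℕ, u n = (α ^ n - β ^ n) / s := by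
    have key : ∀ n : ℕ, u n = (α ^ n - β ^ n) / s ∧ u (n + 1) = (α ^ (n+1) - β ^ (n+1)) / s := by
      intro n
      induction n with
      | zero =>
        constructor
        · simp [hu0]
        · simp [hu1]; field_simp [hαβ]; linarith
      | succ k ih =>
        refine ⟨ih.2, ?_⟩
        rw [hurec k, ih.1, ih.2]
        have hA : α ^ (k + 2) = p * α ^ (k + 1) + q * α ^ k := by
          have : α ^ (k + 2) = α ^ k * α ^ 2 := by ring
          rw [this, hα2, pow_succ]; ring
        have hB : β ^ (k + 2) = p * β ^ (k + 1) + q * β ^ k := by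
          have : β ^ (k + 2) = β ^ k * β ^ 2 := by ring
          rw [this, hβ2, pow_succ]; ring
        rw [show k + 1 + 1 = k + 2 from rfl, hA, hB]
        field_simp
        ring
    exact fun n => (key n).1
  -- denominators
  set d : ℕ → ℝ := fun n => u n * h 0 + u (n + 1) with hd_def
  have hd0 : d 0 = 1 := by simp [hd_def, hu0, hu1]
  have hdne : ∀ n : ℕ, d n ≠ 0 := by
    intro n
    cases n with
    | zero => rw [hd0]; norm_num
    | succ k =>
      intro hcon
      apply h0' (k + 1) (by omega)
      have hu := (hupos k).2
      simp only [hd_def] at hcon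
      field_simp
      nlinarith [hcon]
  -- h formula
  have hform : ∀ n : ℕ, h (n + 1) = q * d n / d (n + 1) := by
    intro n
    induction n with
    | zero =>
      rw [hrec 0, hd0]
      have h2 : u 2 = p := by rw [hurec 0, hu0, hu1]; ring
      have hd1 : d 1 = h 0 + p := by
        simp only [hd_def]
        norm_num [hu1, h2]
      rw [hd1, mul_one, add_comm p]
    | succ k ih =>
      have hdk2 : d (k + 2) = p * d (k + 1) + q * d k := by
        simp only [hd_def]
        rw [hurec (k + 1), hurec k]
        ring
      rw [hrec (k + 1), ih]
      have hne1 := hdne (k + 1)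
      have hne2 := hdne (k + 2)
      have hsum : p + q * d k / d (k + 1) = d (k + 2) / d (k + 1) := by
        rw [hdk2]; field_simp
      rw [hsum, div_div_eq_mul_div]
  -- limit setup
  have hL_ne : h 0 + α ≠ 0 := by
    intro hcon
    apply h0
    rw [hα_def] at hcon ⊢
    linarith
  set L : ℝ := (h 0 + α) / s with hL_def
  have hLne : L ≠ 0 := by
    rw [hL_def]
    exact div_ne_zero hL_ne (ne_of_gt hs_pos)
  set e : ℕ → ℝ := fun n => d n / α ^ n with he_def
  have he : ∀ n : ℕ, e n = L + (β / α) ^ n * (-(h 0 + β) / s) := by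
    intro n
    have hαn : α ^ n ≠ 0 := pow_ne_zero n hα_ne
    rw [he_def, hd_def, hL_def]
    simp only [hbin n, hbin (n + 1), div_pow]
    field_simp
    ring
  have habs : |β / α| < 1 := by
    rw [abs_div, abs_of_neg hβ_neg, abs_of_pos hα_pos, div_lt_one hα_pos]
    linarith
  have htende : Tendsto e atTop (nhds L) := by
    have h1 : Tendsto (fun n : ℕ => (β / α) ^ n) atTop (nhds 0) :=
      tendsto_pow_atTop_nhds_zero_iff.mpr habs
    have h2 : Tendsto (fun n : ℕ => L + (β / α) ^ n * (-(h 0 + β) / s)) atTop (nhds (L + 0 * (-(h 0 + β) / s))) :=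
      tendsto_const_nhds.add (h1.mul tendsto_const_nhds)
    rw [zero_mul, add_zero] at h2
    exact h2.congr (fun n => (he n).symm)
  have hqα : (-p + s) / 2 = q / α := by
    rw [hα_def]
    rw [div_eq_div_iff (by norm_num) (by positivity)]
    nlinarith [hs2]
  constructor
  · rw [hqα]
    rw [← Filter.tendsto_add_atTop_iff_nat 1]
    have heq : ∀ n : ℕ, h (n + 1) = q * e n / (α * e (n + 1)) := by
      intro n
      have hαn : α ^ n ≠ 0 := pow_ne_zero n hα_ne
      have h2 : α * e (n + 1) = d (n + 1) / α ^ n := by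
        show α * (d (n + 1) / α ^ (n + 1)) = d (n + 1) / α ^ n
        rw [pow_succ, ← div_div, mul_div_assoc', mul_div_cancel_left₀ _ hα_ne]
      rw [hform n, show e n = d n / α ^ n from rfl, h2, mul_div_assoc',
        div_div_div_cancel_right₀ hαn]
    have htend2 : Tendsto (fun n => q * e n / (α * e (n + 1))) atTop (nhds (q * L / (α * L))) := by
      have hnum : Tendsto (fun n => q * e n) atTop (nhds (q * L)) :=
        tendsto_const_nhds.mul htende
      have hden : Tendsto (fun n => α * e (n + 1)) atTop (nhds (α * L)) :=
        tendsto_const_nhds.mul (htende.comp (tendsto_add_atTop_nat 1))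
      exact hnum.div hden (mul_ne_zero hα_ne hLne)
    have hval : q * L / (α * L) = q / α := by
      rw [mul_comm q L, mul_comm α L, mul_div_mul_left _ _ hLne]
    rw [hval] at htend2
    exact htend2.congr (fun n => (heq n).symm)
  · have : -p + s = -p + s := rfl
    rw [hqα]
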